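/- Let K be a set of points of PG(k−1, F_2) that is 2-divisible (every hyperplane misses an even number of points of K). If K has no tangent line (no line of PG(k−1, F_2) meets K in exactly one point), then the complement of K in the point set of PG(k−1, F_2) is a subspace, and hence |K| ≥ 2^(k−1). -/

import Mathlib

/-- A nonempty 2-divisible point set in PG(k−1, F_2) without a tangent line has
a complement which is (the set of nonzero points of) a subspace; hence it has at
least 2^(k−1) points. -/
theorem no_tangent_complement_subspace {k : ℕ}
    (K : Set (Fin k → ZMod 2)) (h0 : ∀ x ∈ K, x ≠ 0) (hne : K.Nonempty)
    (hdiv : ∀ a : Fin k → ZMod 2, a ≠ 0 →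
      Even {x ∈ K | ∑ i, a i * x i ≠ 0}.ncard)
    (htan : ∀ u v : Fin k → ZMod 2, u ≠ 0 → v ≠ 0 → u ≠ v →
      ({u, v, u + v} ∩ K).ncard ≠ 1) :
    (∃ W : Submodule (ZMod 2) (Fin k → ZMod 2),
        {x : Fin k → ZMod 2 | x ≠ 0 ∧ x ∉ K} = {x | x ∈ W ∧ x ≠ 0}) ∧
      2 ^ (k - 1) ≤ K.ncard := by
  classical
  have h0' : (0 : Fin k → ZMod 2) ∉ K := fun h => (h0 0 h) rfl
  -- closure of Kᶜ under addition
  have hadd : ∀ u v : Fin k → ZMod 2, u ∉ K → v ∉ K → u + v ∉ K := by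
    intro u v hu hv huv
    by_cases hu0 : u = 0
    · subst hu0; rw [zero_add] at huv; exact hv huv
    by_cases hv0 : v = 0
    · subst hv0; rw [add_zero] at huv; exact hu huv
    by_cases huv0 : u = v
    · subst huv0
      have : u + u = 0 := by
        ext i; simp [CharTwo.add_self_eq_zero]
      rw [this] at huv; exact h0' huv
    · apply htan u v hu0 hv0 huv0
      have hs : ({u, v, u + v} : Set (Fin k → ZMod 2)) ∩ K = {u + v} := by
        ext x
        constructor
        · rintro ⟨hx1, hx2⟩
          rcases hx1 with rfl | rfl | rfl
          · exact absurd hx2 hu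
          · exact absurd hx2 hv
          · rfl
        · rintro rfl
          exact ⟨by simp, huv⟩
      rw [hs, Set.ncard_singleton]
  have hc2 : ∀ c : ZMod 2, c = 0 ∨ c = 1 := by decide
  let W : Submodule (ZMod 2) (Fin k → ZMod 2) :=
    { carrier := Kᶜ
      add_mem' := fun hu hv => hadd _ _ hu hv
      zero_mem' := h0'
      smul_mem' := by
        intro c x hx
        rcases hc2 c with rfl | rfl
        · simpa using h0'
        · simpa using hx }
  have hW : (W : Set (Fin k → ZMod 2)) = Kᶜ := rfl
  refine ⟨⟨W, ?_⟩, ?_⟩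
  · ext x
    simp only [Set.mem_setOf_eq]
    constructor
    · rintro ⟨hx0, hxK⟩; exact ⟨hxK, hx0⟩
    · rintro ⟨hxW, hx0⟩; exact ⟨hx0, hxW⟩
  · -- counting
    rcases k with _ | k
    · obtain ⟨x, hx⟩ := hne
      exact absurd (funext fun i => i.elim0) (h0 x hx)
    have hWtop : W ≠ ⊤ := by
      obtain ⟨x, hx⟩ := hne
      intro h
      have : x ∈ W := h ▸ Submodule.mem_top
      exact this hx
    have hfr : Module.finrank (ZMod 2) W < k + 1 := by
      have := Submodule.finrank_lt (K := ZMod 2) (V := Fin (k+1) → ZMod 2)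
        hWtop
      simpa [Module.finrank_pi] using this
    have hcardW : Nat.card W = 2 ^ Module.finrank (ZMod 2) W := by
      haveI : Fintype W := Fintype.ofFinite W
      have h := Module.card_eq_pow_finrank (K := ZMod 2) (V := W)
      simpa [Nat.card_eq_fintype_card, ZMod.card] using h
    have hWle : Nat.card W ≤ 2 ^ k := by
      rw [hcardW]
      exact Nat.pow_le_pow_right (by norm_num) (by omega)
    have hcompl : K.ncard + Kᶜ.ncard = 2 ^ (k + 1) := by
      have := Set.ncard_add_ncard_compl K
      rwa [Nat.card_eq_fintype_card, Fintype.card_fun, ZMod.card,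
        Fintype.card_fin] at this
    have hKc : Kᶜ.ncard = Nat.card W := by
      rw [← hW]; exact (Nat.card_coe_set_eq _).symm
    have h2 : 2 ^ (k + 1) = 2 ^ k + 2 ^ k := by ring
    simp only [Nat.add_sub_cancel]
    omega
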